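/- Let c be a positive integer and let v : 2^O → ℝ be an order-neutral submodular function all of whose marginal gains lie in {−1, 0, c}. Then for any bundle X ⊆ O there exist pairwise disjoint sets X^c, X^0, X^{−1} with union X such that v(X^c ∪ X^0) = v(X^c) = c·|X^c| and v(X) = c·|X^c| − |X^{−1}|. -/

import Mathlib

open Finset

/-- A set function is submodular: `v ∅ = 0` and decreasing marginal gains. -/
def Submodular {α : Type*} [DecidableEq α] (v : Finset α → ℝ) : Prop :=
  v ∅ = 0 ∧ ∀ S T : Finset α, S ⊆ T → ∀ o ∉ T,
    v (insert o T) - v T ≤ v (insert o S) - v S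

/-- The telescoping sum vector of marginal gains along an ordering `l`. -/
def margList {α : Type*} [DecidableEq α] (v : Finset α → ℝ) (l : List α) : List ℝ :=
  (List.range l.length).map fun j =>
    v ((l.take (j + 1)).toFinset) - v ((l.take j).toFinset)

/-- The sorted (ascending) telescoping sum vector. -/
noncomputable def sortedVec {α : Type*} [DecidableEq α] (v : Finset α → ℝ) (l : List α) :
    List ℝ :=
  Multiset.sort (margList v l) (· ≤ ·)

/-- `l` is an ordering of the bundle `S`. -/
def IsOrdering {α : Type*} [DecidableEq α] (l : List α) (S : Finset α) : Prop :=
  l.Nodup ∧ l.toFinset = S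

/-- Order-neutrality: any two orderings of a bundle give the same sorted telescoping
sum vector. -/
def OrderNeutral {α : Type*} [DecidableEq α] (v : Finset α → ℝ) : Prop :=
  ∀ (S : Finset α) (l₁ l₂ : List α), IsOrdering l₁ S → IsOrdering l₂ S →
    sortedVec v l₁ = sortedVec v l₂
section Aux
variable {α : Type*} [DecidableEq α] {c : ℕ} {v : Finset α → ℝ} {X : Finset α}

lemma card_sdiff_insert_lt {S : Finset α} (hS : S ⊆ X) {o : α} (hoX : o ∈ X) (hoS : o ∉ S) :
    (X \ insert o S).card < (X \ S).card := by
  apply Finset.card_lt_card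
  constructor
  · exact Finset.sdiff_subset_sdiff le_rfl (Finset.subset_insert _ _)
  · intro h
    have : o ∈ X \ insert o S := h (Finset.mem_sdiff.2 ⟨hoX, hoS⟩)
    simp at this

lemma greedy1 (hsub : Submodular v)
    (X : Finset α) :
    ∀ n : ℕ, ∀ S : Finset α, S ⊆ X → (X \ S).card ≤ n → v S = c * S.card →
    ∃ A : Finset α, S ⊆ A ∧ A ⊆ X ∧ v A = c * A.card ∧
      ∀ o ∈ X, o ∉ A → v (insert o A) - v A ≠ c := by
  intro n
  induction n with
  | zero =>
    intro S hSX hcard hvS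
    refine ⟨S, le_rfl, hSX, hvS, ?_⟩
    intro o hoX hoS
    exfalso
    have : o ∈ X \ S := Finset.mem_sdiff.2 ⟨hoX, hoS⟩
    have := Finset.card_eq_zero.1 (Nat.le_zero.1 hcard)
    simp [this] at *
  | succ n ih =>
    intro S hSX hcard hvS
    by_cases h : ∃ o ∈ X, o ∉ S ∧ v (insert o S) - v S = c
    · obtain ⟨o, hoX, hoS, ho⟩ := h
      have hsub' : insert o S ⊆ X := Finset.insert_subset hoX hSX
      have hlt := card_sdiff_insert_lt hSX hoX hoS
      have hv' : v (insert o S) = c * (insert o S).card := by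
        rw [Finset.card_insert_of_notMem hoS]
        push_cast
        linarith
      obtain ⟨A, hA1, hA2, hA3, hA4⟩ := ih (insert o S) hsub' (by omega) hv'
      exact ⟨A, (Finset.subset_insert _ _).trans hA1, hA2, hA3, hA4⟩
    · push_neg at h
      exact ⟨S, le_rfl, hSX, hvS, h⟩

lemma greedy2 (hsub : Submodular v) (hc : 0 < c)
    (hvals : ∀ (S : Finset α) (o : α), o ∉ S →
      v (insert o S) - v S ∈ ({-1, 0, (c : ℝ)} : Set ℝ))
    (X : Finset α) :
    ∀ n : ℕ, ∀ B : Finset α, B ⊆ X → (X \ B).card ≤ n →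
    (∀ o ∈ X, o ∉ B → v (insert o B) - v B ≤ 0) →
    ∃ C : Finset α, B ⊆ C ∧ C ⊆ X ∧ v C = v B ∧
      ∀ o ∈ X, o ∉ C → v (insert o C) - v C ≤ -1 := by
  intro n
  induction n with
  | zero =>
    intro B hBX hcard hinv
    refine ⟨B, le_rfl, hBX, rfl, ?_⟩
    intro o hoX hoB
    exfalso
    have : o ∈ X \ B := Finset.mem_sdiff.2 ⟨hoX, hoB⟩
    have := Finset.card_eq_zero.1 (Nat.le_zero.1 hcard)
    simp [this] at *
  | succ n ih =>
    intro B hBX hcard hinv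
    by_cases h : ∃ o ∈ X, o ∉ B ∧ v (insert o B) - v B = 0
    · obtain ⟨o, hoX, hoB, ho⟩ := h
      have hsub' : insert o B ⊆ X := Finset.insert_subset hoX hBX
      have hlt := card_sdiff_insert_lt hBX hoX hoB
      have hinv' : ∀ o' ∈ X, o' ∉ insert o B →
          v (insert o' (insert o B)) - v (insert o B) ≤ 0 := by
        intro o' ho'X ho'
        have h1 : o' ∉ B := fun hb => ho' (Finset.mem_insert_of_mem hb)
        calc v (insert o' (insert o B)) - v (insert o B)
            ≤ v (insert o' B) - v B := hsub.2 B (insert o B) (Finset.subset_insert _ _) o' ho'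
          _ ≤ 0 := hinv o' ho'X h1
      obtain ⟨C, hBC, hCX, hvC, hC⟩ := ih (insert o B) hsub' (by omega) hinv'
      refine ⟨C, (Finset.subset_insert _ _).trans hBC, hCX, ?_, hC⟩
      linarith
    · push_neg at h
      refine ⟨B, le_rfl, hBX, rfl, ?_⟩
      intro o hoX hoB
      have hne := h o hoX hoB
      have hle := hinv o hoX hoB
      have hcpos : (0:ℝ) < c := by exact_mod_cast hc
      have hv3 := hvals B o hoB
      simp only [Set.mem_insert_iff, Set.mem_singleton_iff] at hv3
      rcases hv3 with h1 | h1 | h1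
      · linarith [le_of_eq h1]
      · exact absurd h1 hne
      · linarith [le_of_eq h1]

lemma greedy3 (hsub : Submodular v) (hc : 0 < c)
    (hvals : ∀ (S : Finset α) (o : α), o ∉ S →
      v (insert o S) - v S ∈ ({-1, 0, (c : ℝ)} : Set ℝ))
    (X : Finset α) :
    ∀ n : ℕ, ∀ B : Finset α, B ⊆ X → (X \ B).card ≤ n →
    (∀ o ∈ X, o ∉ B → v (insert o B) - v B ≤ -1) →
    v X = v B - (X \ B).card := by
  intro n
  induction n with
  | zero =>
    intro B hBX hcard hinv
    have hempty : X \ B = ∅ := Finset.card_eq_zero.1 (Nat.le_zero.1 hcard)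
    have : X = B := Finset.Subset.antisymm (by
      intro x hx
      by_contra hxB
      have : x ∈ X \ B := Finset.mem_sdiff.2 ⟨hx, hxB⟩
      simp [hempty] at this) hBX
    simp [this, hempty]
  | succ n ih =>
    intro B hBX hcard hinv
    rcases Finset.eq_empty_or_nonempty (X \ B) with he | ⟨o, ho⟩
    · have : X = B := Finset.Subset.antisymm (by
        intro x hx
        by_contra hxB
        have : x ∈ X \ B := Finset.mem_sdiff.2 ⟨hx, hxB⟩
        simp [he] at this) hBX
      simp [this, he]
    · obtain ⟨hoX, hoB⟩ := Finset.mem_sdiff.1 ho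
      have hsub' : insert o B ⊆ X := Finset.insert_subset hoX hBX
      have hlt := card_sdiff_insert_lt hBX hoX hoB
      have hinv' : ∀ o' ∈ X, o' ∉ insert o B →
          v (insert o' (insert o B)) - v (insert o B) ≤ -1 := by
        intro o' ho'X ho'
        have h1 : o' ∉ B := fun hb => ho' (Finset.mem_insert_of_mem hb)
        have hle : v (insert o' (insert o B)) - v (insert o B)
            ≤ v (insert o' B) - v B := hsub.2 B (insert o B) (Finset.subset_insert _ _) o' ho'
        linarith [hinv o' ho'X h1]
      have hrec := ih (insert o B) hsub' (by omega) hinv'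
      have hcard2 : (X \ insert o B).card = (X \ B).card - 1 := by
        rw [Finset.sdiff_insert, Finset.card_erase_of_mem ho]
      have hvo : v (insert o B) - v B = -1 := by
        have hle := hinv o hoX hoB
        have hcpos : (0:ℝ) < c := by exact_mod_cast hc
        have hv3 := hvals B o hoB
        simp only [Set.mem_insert_iff, Set.mem_singleton_iff] at hv3
        rcases hv3 with h1 | h1 | h1
        · exact h1
        · linarith [le_of_eq h1.symm, hle]
        · linarith [le_of_eq h1.symm, hle]
      have hpos : 1 ≤ (X \ B).card := Finset.card_pos.2 ⟨o, ho⟩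
      rw [hrec, hcard2]
      have hcast : (((X \ B).card - 1 : ℕ) : ℝ) = ((X \ B).card : ℝ) - 1 :=
        by push_cast [Nat.cast_sub hpos]; ring
      rw [hcast]
      linarith

end Aux

/-- for a `{-1, 0, c}`-ONSUB function (c a positive integer), any bundle
`X` decomposes into pairwise disjoint `X^c, X^0, X^{-1}` with
`v(X^c ∪ X^0) = v(X^c) = c·|X^c|` and `v(X) = c·|X^c| - |X^{-1}|`. -/
theorem three_decomposition_exists {α : Type*} [Fintype α] [DecidableEq α]
    (c : ℕ) (hc : 0 < c) (v : Finset α → ℝ) (hsub : Submodular v) (hon : OrderNeutral v)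
    (hvals : ∀ (S : Finset α) (o : α), o ∉ S →
      v (insert o S) - v S ∈ ({-1, 0, (c : ℝ)} : Set ℝ)) :
    ∀ X : Finset α, ∃ Xc X0 Xm : Finset α,
      Xc ∪ X0 ∪ Xm = X ∧
      Disjoint Xc X0 ∧ Disjoint Xc Xm ∧ Disjoint X0 Xm ∧
      v (Xc ∪ X0) = v Xc ∧ v Xc = (c : ℝ) * Xc.card ∧
      v X = (c : ℝ) * Xc.card - Xm.card := by
  intro X
  have hv0 : v (∅ : Finset α) = (c : ℝ) * (∅ : Finset α).card := by
    simp [hsub.1]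
  obtain ⟨A, -, hAX, hA3, hA4⟩ :=
    greedy1 (c := c) hsub X ((X \ ∅).card) ∅ (Finset.empty_subset X) le_rfl hv0
  have hinvA : ∀ o ∈ X, o ∉ A → v (insert o A) - v A ≤ 0 := by
    intro o hoX hoA
    have hv3 := hvals A o hoA
    simp only [Set.mem_insert_iff, Set.mem_singleton_iff] at hv3
    rcases hv3 with h1 | h1 | h1
    · linarith [le_of_eq h1]
    · exact le_of_eq h1
    · exact absurd h1 (hA4 o hoX hoA)
  obtain ⟨C, hAC, hCX, hvC, hC4⟩ :=
    greedy2 (c := c) hsub hc hvals X ((X \ A).card) A hAX le_rfl hinvA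
  have hvX := greedy3 (c := c) hsub hc hvals X ((X \ C).card) C hCX le_rfl hC4
  refine ⟨A, C \ A, X \ C, ?_, Finset.disjoint_sdiff, ?_, ?_, ?_, hA3, ?_⟩
  · rw [Finset.union_sdiff_of_subset hAC, Finset.union_sdiff_of_subset hCX]
  · exact Finset.disjoint_sdiff.mono_left hAC
  · exact Finset.disjoint_sdiff.mono_left (Finset.sdiff_subset)
  · rw [Finset.union_sdiff_of_subset hAC, hvC]
  · rw [hvX, hvC, hA3]
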